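/- Let k be an infinite field and l₀ a finite-dimensional étale (i.e. finite separable, possibly a product of separable field extensions) k-algebra of dimension 8. The set of elements α ∈ l₀ of trace zero that generate l₀ as a k-algebra is nonempty. -/

import Mathlib

universe u

open Polynomial

section Aux

variable {k : Type u} [Field k]

/-- Shifting a generator by a constant preserves the adjoined subalgebra. -/
lemma aux_adjoin_add_algebraMap {A : Type*} [CommRing A] [Algebra k A] (x : A) (c : k) :
    Algebra.adjoin k {x + algebraMap k A c} = Algebra.adjoin k {x} := by
  apply le_antisymm
  · rw [Algebra.adjoin_le_iff, Set.singleton_subset_iff]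
    have hx : x ∈ Algebra.adjoin k {x} := Algebra.subset_adjoin rfl
    exact add_mem hx (Subalgebra.algebraMap_mem _ c)
  · rw [Algebra.adjoin_le_iff, Set.singleton_subset_iff]
    have hx : x + algebraMap k A c ∈ Algebra.adjoin k {x + algebraMap k A c} :=
      Algebra.subset_adjoin rfl
    have := sub_mem hx (Subalgebra.algebraMap_mem (Algebra.adjoin k {x + algebraMap k A c}) c)
    simpa using this

lemma aux_adjoin_map_eq_top {A B : Type*} [CommRing A] [CommRing B] [Algebra k A] [Algebra k B]
    (e : A ≃ₐ[k] B) {x : A} (h : Algebra.adjoin k {x} = ⊤) :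
    Algebra.adjoin k {e x} = ⊤ := by
  have : Algebra.adjoin k {e x} = (Algebra.adjoin k {x}).map e.toAlgHom := by
    rw [AlgHom.map_adjoin]
    simp
  rw [this, h, Algebra.map_top, AlgHom.range_eq_top]
  exact e.surjective

/-- The pair step: given a monogenic finite algebra `A` and a finite separable field
extension `L`, the product `A × L` is monogenic. -/
lemma aux_pair {A L : Type u} [Infinite k] [CommRing A] [Algebra k A] [Module.Finite k A]
    [Field L] [Algebra k L] [FiniteDimensional k L] [Algebra.IsSeparable k L]
    {β : A} (hβ : Algebra.adjoin k {β} = ⊤) :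
    ∃ γ : A × L, Algebra.adjoin k {γ} = ⊤ := by
  classical
  obtain ⟨α₀, hα₀⟩ := Field.exists_primitive_element k L
  have hα₀int : IsIntegral k α₀ := IsIntegral.of_finite k α₀
  have hα₀' : Algebra.adjoin k {α₀} = ⊤ := by
    have h1 := IntermediateField.adjoin_simple_toSubalgebra_of_isAlgebraic hα₀int.isAlgebraic
    rw [hα₀, IntermediateField.top_toSubalgebra] at h1
    exact h1.symm
  have hβint : IsIntegral k β := IsIntegral.of_finite k β
  set q := minpoly k β with hq
  have hqne : q ≠ 0 := minpoly.ne_zero hβint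
  -- choose a shift c avoiding the roots of q
  have hbad : {c : k | aeval (α₀ + algebraMap k L c) q = 0}.Finite := by
    have h1 : {x : L | IsRoot (q.map (algebraMap k L)) x}.Finite :=
      Polynomial.finite_setOf_isRoot (by
        simpa using (Polynomial.map_ne_zero_iff (algebraMap k L).injective).mpr hqne)
    have h2 : {c : k | aeval (α₀ + algebraMap k L c) q = 0} ⊆
        (fun c : k => α₀ + algebraMap k L c) ⁻¹' {x : L | IsRoot (q.map (algebraMap k L)) x} := by
      intro c hc
      simp only [Set.mem_preimage, Set.mem_setOf_eq, IsRoot.def, Polynomial.eval_map,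
        ← Polynomial.aeval_def]
      exact hc
    refine Set.Finite.subset (Set.Finite.preimage ?_ h1) h2
    intro c _ c' _ h
    have := add_left_cancel h
    exact (algebraMap k L).injective this
  obtain ⟨c, hc⟩ : ∃ c : k, aeval (α₀ + algebraMap k L c) q ≠ 0 := by
    have := hbad.infinite_compl
    obtain ⟨c, hc⟩ := this.nonempty
    exact ⟨c, hc⟩
  set γ₂ := α₀ + algebraMap k L c with hγ₂
  have hγ₂gen : Algebra.adjoin k {γ₂} = ⊤ := by
    rw [hγ₂, aux_adjoin_add_algebraMap]
    exact hα₀'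
  have hγ₂int : IsIntegral k γ₂ := IsIntegral.of_finite k γ₂
  set p := minpoly k γ₂ with hp
  have hpirr : Irreducible p := minpoly.irreducible hγ₂int
  have hpq : ¬ p ∣ q := by
    intro hdvd
    obtain ⟨r, hr⟩ := hdvd
    apply hc
    rw [hr, map_mul, minpoly.aeval, zero_mul]
  obtain ⟨u, v, huv⟩ : IsCoprime p q := hpirr.coprime_iff_not_dvd.mpr hpq
  refine ⟨(β, γ₂), ?_⟩
  rw [Algebra.adjoin_singleton_eq_range_aeval, AlgHom.range_eq_top]
  intro x
  obtain ⟨a, b⟩ := x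
  -- a is a polynomial in β, b is a polynomial in γ₂
  have ha : a ∈ Algebra.adjoin k {β} := by rw [hβ]; trivial
  have hb : b ∈ Algebra.adjoin k {γ₂} := by rw [hγ₂gen]; trivial
  rw [Algebra.adjoin_singleton_eq_range_aeval] at ha hb
  obtain ⟨f, hf⟩ := ha
  obtain ⟨g, hg⟩ := hb
  have hf' : (aeval β) f = a := hf
  have hg' : (aeval γ₂) g = b := hg
  refine ⟨f * (u * p) + g * (v * q), ?_⟩
  have h1 : (aeval ((β, γ₂) : A × L)) (f * (u * p) + g * (v * q)) =
      ((aeval β) (f * (u * p) + g * (v * q)), (aeval γ₂) (f * (u * p) + g * (v * q))) := by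
    have hfst := Polynomial.aeval_algHom_apply (AlgHom.fst k A L) ((β, γ₂) : A × L)
      (f * (u * p) + g * (v * q))
    have hsnd := Polynomial.aeval_algHom_apply (AlgHom.snd k A L) ((β, γ₂) : A × L)
      (f * (u * p) + g * (v * q))
    exact Prod.ext hfst.symm hsnd.symm
  rw [h1]
  have hqβ : (aeval β) q = 0 := minpoly.aeval k β
  have hpγ : (aeval γ₂) p = 0 := minpoly.aeval k γ₂
  have huvβ : (aeval β) u * (aeval β) p = 1 := by
    have := congrArg (aeval β) huv
    simp only [map_add, map_mul, map_one, hqβ, mul_zero, add_zero] at this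
    exact this
  have huvγ : (aeval γ₂) v * (aeval γ₂) q = 1 := by
    have := congrArg (aeval γ₂) huv
    simp only [map_add, map_mul, map_one, hpγ, mul_zero, zero_add] at this
    exact this
  have e1 : (aeval β) (f * (u * p) + g * (v * q)) = a := by
    simp only [map_add, map_mul]
    linear_combination (aeval β f) * huvβ + (aeval β g * aeval β v) * hqβ + hf'
  have e2 : (aeval γ₂) (f * (u * p) + g * (v * q)) = b := by
    simp only [map_add, map_mul]
    linear_combination (aeval γ₂ g) * huvγ + (aeval γ₂ f * aeval γ₂ u) * hpγ + hg'
  rw [e1, e2]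

/-- Any finite product of finite separable field extensions of an infinite field is
monogenic. -/
lemma aux_pi (ι : Type u) [Finite ι] [Infinite k] :
    ∀ (K : ι → Type u) [∀ i, Field (K i)] [∀ i, Algebra k (K i)]
      [∀ i, FiniteDimensional k (K i)] [∀ i, Algebra.IsSeparable k (K i)],
      ∃ γ : ∀ i, K i, Algebra.adjoin k {γ} = ⊤ := by
  classical
  induction ι using Finite.induction_empty_option with
  | of_equiv e ih =>
    rename_i α β _
    intro K _ _ _ _
    obtain ⟨γ', hγ'⟩ := ih (fun a => K (e a))
    let F : (∀ b, K b) →ₐ[k] (∀ a, K (e a)) :=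
      Pi.algHom k _ (fun a => Pi.evalAlgHom k K (e a))
    have hFbij : Function.Bijective F := (Equiv.piCongrLeft' K e.symm).bijective
    let E : (∀ b, K b) ≃ₐ[k] (∀ a, K (e a)) := AlgEquiv.ofBijective F hFbij
    exact ⟨E.symm γ', aux_adjoin_map_eq_top E.symm hγ'⟩
  | h_empty =>
    intro K _ _ _ _
    refine ⟨fun i => i.elim, ?_⟩
    have : Subsingleton (∀ i : PEmpty.{u+1}, K i) := ⟨fun a b => funext fun i => i.elim⟩
    rw [eq_top_iff]
    intro x _
    rw [Subsingleton.elim x 1]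
    exact one_mem _
  | h_option ih =>
    rename_i α _
    intro K _ _ _ _
    obtain ⟨β, hβ⟩ := ih (fun i => K (some i))
    obtain ⟨⟨a, l⟩, hγ⟩ := aux_pair (k := k) (A := ∀ i, K (some i)) (L := K none) hβ
    let F : (∀ i : Option α, K i) →ₐ[k] (∀ i, K (some i)) × K none :=
      AlgHom.prod (Pi.algHom k _ (fun i => Pi.evalAlgHom k K (some i)))
        (Pi.evalAlgHom k K none)
    have hFbij : Function.Bijective F := by
      constructor
      · intro x y h
        have h1 := congrArg Prod.fst h
        have h2 := congrArg Prod.snd h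
        funext i
        cases i with
        | none => exact h2
        | some j => exact congrFun h1 j
      · rintro ⟨a', l'⟩
        refine ⟨fun i => Option.rec l' a' i, ?_⟩
        refine Prod.ext ?_ rfl
        funext j
        rfl
    let E : (∀ i : Option α, K i) ≃ₐ[k] (∀ i, K (some i)) × K none :=
      AlgEquiv.ofBijective F hFbij
    exact ⟨E.symm (a, l), aux_adjoin_map_eq_top E.symm hγ⟩

end Aux

/-- For an infinite field k (char ≠ 2) and an étale k-algebra l₀ of
dimension 8, there exists a trace-zero element generating l₀ as a k-algebra. -/
theorem stmt13 {k l₀ : Type u} [Field k] [Infinite k] (hchar : (2 : k) ≠ 0)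
    [CommRing l₀] [Algebra k l₀] [Algebra.Etale k l₀]
    (hdim : Module.finrank k l₀ = 8) :
    ∃ α : l₀, Algebra.trace k l₀ α = 0 ∧ Algebra.adjoin k {α} = ⊤ := by
  classical
  have hfin : Module.Finite k l₀ := Module.finite_of_finrank_pos (by omega)
  letI : IsArtinianRing l₀ := IsArtinianRing.of_finite k l₀
  have hred : IsReduced l₀ := Algebra.FormallyUnramified.isReduced_of_field k l₀
  letI : Finite {I : Ideal l₀ | I.IsMaximal} := (IsArtinianRing.setOfPred_isMaximal_finite l₀).to_subtype
  -- set up the family of residue fields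
  set ι := {I : Ideal l₀ | I.IsMaximal} with hι
  letI : ∀ I : ι, Field (l₀ ⧸ I.1) := fun I => @Ideal.Quotient.field _ _ I.1 I.2
  haveI : ∀ I : ι, FiniteDimensional k (l₀ ⧸ I.1) := fun I =>
    Module.Finite.of_surjective (Ideal.Quotient.mkₐ k I.1).toLinearMap Ideal.Quotient.mk_surjective
  haveI : ∀ I : ι, Algebra.IsSeparable k (l₀ ⧸ I.1) := fun I =>
    Algebra.FormallyUnramified.isSeparable k (l₀ ⧸ I.1)
  -- monogenic generator for the product
  obtain ⟨γ, hγ⟩ := aux_pi (k := k) ι (fun I : ι => l₀ ⧸ I.1)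
  -- transfer back along the Artinian structure theorem
  let F : l₀ →ₐ[k] ∀ I : ι, l₀ ⧸ I.1 := Pi.algHom k _ (fun I => Ideal.Quotient.mkₐ k I.1)
  have hFbij : Function.Bijective F := by
    let g : (∀ J : MaximalSpectrum l₀, l₀ ⧸ J.asIdeal) → ∀ I : ι, l₀ ⧸ I.1 :=
      fun f I => f ⟨I.1, I.2⟩
    have hg : Function.Bijective g :=
      (Equiv.mk g (fun h J => h ⟨J.asIdeal, J.isMaximal⟩) (fun f => rfl) (fun h => rfl)).bijective
    have : ⇑F = g ∘ ⇑(IsArtinianRing.equivPi l₀) := by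
      funext x
      funext I
      rfl
    rw [this]
    exact hg.comp (IsArtinianRing.equivPi l₀).bijective
  let E : l₀ ≃ₐ[k] ∀ I : ι, l₀ ⧸ I.1 := AlgEquiv.ofBijective F hFbij
  have hαgen : Algebra.adjoin k {E.symm γ} = ⊤ := aux_adjoin_map_eq_top E.symm hγ
  set α := E.symm γ with hα
  -- now adjust the trace
  have h8 : (8 : k) ≠ 0 := by
    intro h
    apply hchar
    have : (8 : k) = 2 * 2 * 2 := by norm_num
    rw [this] at h
    rcases mul_eq_zero.mp h with h' | h'
    · rcases mul_eq_zero.mp h' with h'' | h'' <;> exact h''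
    · exact h'
  set t := Algebra.trace k l₀ α with ht
  refine ⟨α + algebraMap k l₀ (-(t / 8)), ?_, ?_⟩
  · rw [map_add, Algebra.trace_algebraMap, hdim, ← ht]
    rw [nsmul_eq_mul]
    push_cast
    field_simp
    ring
  · rw [aux_adjoin_add_algebraMap]
    exact hαgen
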